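/- Let L : 𝕋^d × ℝ^d → ℝ be continuous with (1/(r'C))|v|^{r'} - C ≤ L(x,v) ≤ (C/r')|v|^{r'} + C and r' > 1. Fix 0 ≤ t₁ < t₂ ≤ T with t₂ - t₁ ≤ 1 and x,y ∈ 𝕋^d, and let γ(s) = x + (s-t₁)(y-x)/(t₂-t₁). Fix β ∈ (1/r, 1) with 1 - r'(1-β) > 0. For σ ∈ B₁ ⊂ ℝ^d let x_σ(s) = γ(s) + σ(s-t₁)^β on [t₁,(t₁+t₂)/2] and x_σ(s) = γ(s) + σ(t₂-s)^β on [(t₁+t₂)/2, t₂]. Then (1/|B₁|) ∫_{B₁} ∫_{t₁}^{t₂} L(x_σ(s), ẋ_σ(s)) ds dσ ≤ C'(|x-y|^{r'}(t₂-t₁)^{1-r'} + (t₂-t₁)^{1-r'(1-β)} + (t₂-t₁)) for a constant C' depending only on C, r', β, d. -/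

import Mathlib

open MeasureTheory

private lemma rpow_add_le_aux {a b c : ℝ} (ha : 0 ≤ a) (hb : 0 ≤ b) (hc : 0 ≤ c) :
    (a + b) ^ c ≤ 2 ^ c * (a ^ c + b ^ c) := by
  have hmax : a + b ≤ 2 * max a b := by
    rcases le_total a b with h | h
    · rw [max_eq_right h]; linarith
    · rw [max_eq_left h]; linarith
  have h0 : (0:ℝ) ≤ max a b := le_trans ha (le_max_left a b)
  calc (a + b) ^ c ≤ (2 * max a b) ^ c :=
        Real.rpow_le_rpow (by linarith) hmax hc
    _ = 2 ^ c * (max a b) ^ c := Real.mul_rpow (by norm_num) h0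
    _ ≤ 2 ^ c * (a ^ c + b ^ c) := by
        apply mul_le_mul_of_nonneg_left _ (Real.rpow_nonneg (by norm_num) c)
        rcases le_total a b with h | h
        · rw [max_eq_right h]; nlinarith [Real.rpow_nonneg ha c]
        · rw [max_eq_left h]; nlinarith [Real.rpow_nonneg hb c]

set_option maxHeartbeats 2000000 in
theorem curve_cost_estimate
    (d : ℕ) (C r r' β : ℝ) (hC : 0 < C) (hr : 1 < r)
    (hr' : 1 / r + 1 / r' = 1)
    (hβ1 : 1 / r < β) (hβ2 : β < 1) (hβ3 : 0 < 1 - r' * (1 - β)) :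
    ∃ C' > 0,
      ∀ (L : EuclideanSpace ℝ (Fin d) → EuclideanSpace ℝ (Fin d) → ℝ),
        (Continuous fun z : EuclideanSpace ℝ (Fin d) × EuclideanSpace ℝ (Fin d) =>
          L z.1 z.2) →
        (∀ x v, 1 / (r' * C) * ‖v‖ ^ r' - C ≤ L x v) →
        (∀ x v, L x v ≤ C / r' * ‖v‖ ^ r' + C) →
      ∀ (T t₁ t₂ : ℝ) (x y : EuclideanSpace ℝ (Fin d)),
        0 ≤ t₁ → t₁ < t₂ → t₂ ≤ T → t₂ - t₁ ≤ 1 →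
        (1 / (volume (Metric.closedBall (0 : EuclideanSpace ℝ (Fin d)) 1)).toReal) *
          (∫ σ in Metric.closedBall (0 : EuclideanSpace ℝ (Fin d)) 1,
            ∫ s in t₁..t₂,
              L (x + ((s - t₁) / (t₂ - t₁)) • (y - x) +
                   (if s ≤ (t₁ + t₂) / 2 then (s - t₁) ^ β else (t₂ - s) ^ β) • σ)
                (deriv (fun u : ℝ =>
                  x + ((u - t₁) / (t₂ - t₁)) • (y - x) +
                    (if u ≤ (t₁ + t₂) / 2 then (u - t₁) ^ β else (t₂ - u) ^ β) • σ) s))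
        ≤ C' * (‖x - y‖ ^ r' * (t₂ - t₁) ^ (1 - r') +
            (t₂ - t₁) ^ (1 - r' * (1 - β)) + (t₂ - t₁)) := by
  classical
  -- basic exponent facts
  have hrpos : (0:ℝ) < r := lt_trans one_pos hr
  have h1r : 0 < 1 / r := div_pos one_pos hrpos
  have h1rlt : 1 / r < 1 := by rw [div_lt_one hrpos]; exact hr
  have h1r'pos : 0 < 1 / r' := by linarith
  have hr'pos : 0 < r' := by
    by_contra h
    push_neg at h
    have : 1 / r' ≤ 0 := div_nonpos_of_nonneg_of_nonpos zero_le_one h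
    linarith
  have hr'1 : 1 < r' := by
    have h1 : 1 / r' < 1 := by linarith
    rw [div_lt_one hr'pos] at h1; exact h1
  have hβ0 : 0 < β := lt_trans h1r hβ1
  set p : ℝ := (β - 1) * r' with hpdef
  have hp : -1 < p := by
    have h : p = -(r' * (1 - β)) := by rw [hpdef]; ring
    linarith
  have hp1 : (0:ℝ) < p + 1 := by linarith
  set a : ℝ := C / r' * 2 ^ r' with hadef
  set b : ℝ := a * β ^ r' * (2 / (p + 1)) with hbdef
  have h2r' : (0:ℝ) < 2 ^ r' := Real.rpow_pos_of_pos two_pos r'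
  have hβr' : (0:ℝ) ≤ β ^ r' := Real.rpow_nonneg hβ0.le r'
  have ha0 : 0 < a := mul_pos (div_pos hC hr'pos) h2r'
  have hb0 : 0 ≤ b := by
    have h1 : (0:ℝ) ≤ 2 / (p + 1) := div_nonneg (by norm_num) hp1.le
    rw [hbdef]
    exact mul_nonneg (mul_nonneg ha0.le hβr') h1
  set C' : ℝ := a + b + C with hC'def
  refine ⟨C', by rw [hC'def]; linarith, ?_⟩
  intro L hLc hL1 hL2 T t₁ t₂ x y ht₁ ht ht₂ hle1
  set Δ : ℝ := t₂ - t₁ with hΔdef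
  set m : ℝ := (t₁ + t₂) / 2 with hmdef
  have hΔ : 0 < Δ := sub_pos.mpr ht
  have hm1 : t₁ < m := by rw [hmdef]; linarith
  have hm2 : m < t₂ := by rw [hmdef]; linarith
  set A : ℝ := ‖y - x‖ / Δ with hAdef
  have hA0 : 0 ≤ A := by rw [hAdef]; exact div_nonneg (norm_nonneg _) hΔ.le
  have hAr' : 0 ≤ A ^ r' := Real.rpow_nonneg hA0 r'
  set c₁ : ℝ := a * A ^ r' + C with hc₁def
  set c₂ : ℝ := a * β ^ r' with hc₂def
  have hc₁0 : 0 < c₁ := by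
    rw [hc₁def]
    exact add_pos_of_nonneg_of_pos (mul_nonneg ha0.le hAr') hC
  have hc₂0 : 0 ≤ c₂ := by rw [hc₂def]; exact mul_nonneg ha0.le hβr'
  -- the velocity field
  set v : EuclideanSpace ℝ (Fin d) → ℝ → EuclideanSpace ℝ (Fin d) := fun σ s =>
    Δ⁻¹ • (y - x) +
      (if s ≤ m then β * (s - t₁) ^ (β - 1) else -(β * (t₂ - s) ^ (β - 1))) • σ with hvdef
  -- the curve (as appearing in the statement)
  set φ : EuclideanSpace ℝ (Fin d) → ℝ → EuclideanSpace ℝ (Fin d) := fun σ s =>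
    x + ((s - t₁) / Δ) • (y - x) +
      (if s ≤ m then (s - t₁) ^ β else (t₂ - s) ^ β) • σ with hφdef
  -- derivative computation
  have hderiv : ∀ (σ : EuclideanSpace ℝ (Fin d)), ∀ s ∈ Set.Ioo t₁ t₂, s ≠ m →
      deriv (fun u : ℝ => x + ((u - t₁) / Δ) • (y - x) +
        (if u ≤ m then (u - t₁) ^ β else (t₂ - u) ^ β) • σ) s = v σ s := by
    intro σ s hs hne
    have hlin : HasDerivAt (fun u : ℝ => x + ((u - t₁) / Δ) • (y - x)) (Δ⁻¹ • (y - x)) s := by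
      have h1 : HasDerivAt (fun u : ℝ => (u - t₁) / Δ) Δ⁻¹ s := by
        simpa using (((hasDerivAt_id s).sub_const t₁).div_const Δ)
      exact (h1.smul_const (y - x)).const_add x
    rcases lt_or_gt_of_ne hne with hsm | hsm
    · have hpow : HasDerivAt (fun u : ℝ => (u - t₁) ^ β) (β * (s - t₁) ^ (β - 1)) s := by
        have h2 : HasDerivAt (fun u : ℝ => u - t₁) 1 s := (hasDerivAt_id s).sub_const t₁
        have h3 := (Real.hasDerivAt_rpow_const
          (x := s - t₁) (p := β) (Or.inl (ne_of_gt (sub_pos.mpr hs.1)))).comp s h2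
        rw [show β * (s - t₁) ^ (β - 1) = β * (s - t₁) ^ (β - 1) * 1 by ring]
        exact h3
      have hd : HasDerivAt (fun u : ℝ => x + ((u - t₁) / Δ) • (y - x) + ((u - t₁) ^ β) • σ)
          (Δ⁻¹ • (y - x) + (β * (s - t₁) ^ (β - 1)) • σ) s := hlin.add (hpow.smul_const σ)
      have hev : (fun u : ℝ => x + ((u - t₁) / Δ) • (y - x) +
          (if u ≤ m then (u - t₁) ^ β else (t₂ - u) ^ β) • σ)
          =ᶠ[nhds s] (fun u : ℝ => x + ((u - t₁) / Δ) • (y - x) + ((u - t₁) ^ β) • σ) := by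
        filter_upwards [Iio_mem_nhds hsm] with u hu
        rw [if_pos (le_of_lt hu)]
      rw [hvdef]
      simp only [if_pos (le_of_lt hsm)]
      exact (hd.congr_of_eventuallyEq hev).deriv
    · have hpow : HasDerivAt (fun u : ℝ => (t₂ - u) ^ β) (-(β * (t₂ - s) ^ (β - 1))) s := by
        have h2 : HasDerivAt (fun u : ℝ => t₂ - u) (-1) s := by
          exact (hasDerivAt_id s).const_sub t₂
        have h3 := (Real.hasDerivAt_rpow_const
          (x := t₂ - s) (p := β) (Or.inl (ne_of_gt (sub_pos.mpr hs.2)))).comp s h2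
        rw [show -(β * (t₂ - s) ^ (β - 1)) = β * (t₂ - s) ^ (β - 1) * -1 by ring]
        exact h3
      have hd : HasDerivAt (fun u : ℝ => x + ((u - t₁) / Δ) • (y - x) + ((t₂ - u) ^ β) • σ)
          (Δ⁻¹ • (y - x) + (-(β * (t₂ - s) ^ (β - 1))) • σ) s := hlin.add (hpow.smul_const σ)
      have hev : (fun u : ℝ => x + ((u - t₁) / Δ) • (y - x) +
          (if u ≤ m then (u - t₁) ^ β else (t₂ - u) ^ β) • σ)
          =ᶠ[nhds s] (fun u : ℝ => x + ((u - t₁) / Δ) • (y - x) + ((t₂ - u) ^ β) • σ) := by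
        filter_upwards [Ioi_mem_nhds hsm] with u hu
        rw [if_neg (not_le.mpr hu)]
      rw [hvdef]
      simp only [if_neg (not_le.mpr hsm)]
      exact (hd.congr_of_eventuallyEq hev).deriv
  -- replace the deriv by v inside the inner integral
  have hIJ : ∀ σ : EuclideanSpace ℝ (Fin d),
      (∫ s in t₁..t₂,
        L (x + ((s - t₁) / Δ) • (y - x) +
            (if s ≤ m then (s - t₁) ^ β else (t₂ - s) ^ β) • σ)
          (deriv (fun u : ℝ => x + ((u - t₁) / Δ) • (y - x) +
            (if u ≤ m then (u - t₁) ^ β else (t₂ - u) ^ β) • σ) s))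
      = ∫ s in Set.Ioc t₁ t₂, L (φ σ s) (v σ s) := by
    intro σ
    rw [intervalIntegral.integral_of_le ht.le]
    apply MeasureTheory.setIntegral_congr_ae measurableSet_Ioc
    have h0 : volume ({m, t₂} : Set ℝ) = 0 :=
      (Set.toFinite _).measure_zero volume
    have hae : ∀ᵐ s : ℝ ∂volume, s ∉ ({m, t₂} : Set ℝ) :=
      measure_eq_zero_iff_ae_notMem.mp h0
    filter_upwards [hae] with s hs hsIoc
    simp only [Set.mem_insert_iff, Set.mem_singleton_iff, not_or] at hs
    have hs1 : s ∈ Set.Ioo t₁ t₂ := ⟨hsIoc.1, lt_of_le_of_ne hsIoc.2 hs.2⟩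
    rw [hderiv σ s hs1 hs.1]
  -- pointwise upper bound for the integrand
  have hvnorm : ∀ (σ : EuclideanSpace ℝ (Fin d)), ‖σ‖ ≤ 1 → ∀ s ∈ Set.Ioc t₁ t₂,
      L (φ σ s) (v σ s) ≤ c₁ + c₂ * ((s - t₁) ^ p + (t₂ - s) ^ p) := by
    intro σ hσ s hsIoc
    have hb1 : (0:ℝ) ≤ s - t₁ := by have := hsIoc.1; linarith
    have hb2 : (0:ℝ) ≤ t₂ - s := by have := hsIoc.2; linarith
    have hw1 : (0:ℝ) ≤ (s - t₁) ^ p := Real.rpow_nonneg hb1 p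
    have hw2 : (0:ℝ) ≤ (t₂ - s) ^ p := Real.rpow_nonneg hb2 p
    have hnormv : ∀ (z : ℝ) (τ : EuclideanSpace ℝ (Fin d)), ‖τ‖ ≤ 1 → 0 ≤ z →
        ‖Δ⁻¹ • (y - x) + z • τ‖ ≤ A + z := by
      intro z τ hτ hz
      calc ‖Δ⁻¹ • (y - x) + z • τ‖ ≤ ‖Δ⁻¹ • (y - x)‖ + ‖z • τ‖ := norm_add_le _ _
        _ = Δ⁻¹ * ‖y - x‖ + z * ‖τ‖ := by
            rw [norm_smul, norm_smul, Real.norm_eq_abs, Real.norm_eq_abs,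
              abs_of_nonneg (inv_nonneg.mpr hΔ.le), abs_of_nonneg hz]
        _ ≤ A + z := by
            have h1 : Δ⁻¹ * ‖y - x‖ = A := by rw [hAdef]; field_simp
            have h2 : z * ‖τ‖ ≤ z * 1 := mul_le_mul_of_nonneg_left hτ hz
            linarith
    -- bound the rpow of the norm
    have hkey : ‖v σ s‖ ^ r' ≤ 2 ^ r' * (A ^ r' + β ^ r' * ((s - t₁) ^ p + (t₂ - s) ^ p)) := by
      have main : ∀ e : ℝ, 0 ≤ e → ‖v σ s‖ ≤ A + β * e ^ (β - 1) →
          e ^ p ≤ (s - t₁) ^ p + (t₂ - s) ^ p →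
          ‖v σ s‖ ^ r' ≤ 2 ^ r' * (A ^ r' + β ^ r' * ((s - t₁) ^ p + (t₂ - s) ^ p)) := by
        intro e he h4 hep
        have hz : (0:ℝ) ≤ β * e ^ (β - 1) :=
          mul_nonneg hβ0.le (Real.rpow_nonneg he _)
        have h5 : ‖v σ s‖ ^ r' ≤ (A + β * e ^ (β - 1)) ^ r' :=
          Real.rpow_le_rpow (norm_nonneg _) h4 hr'pos.le
        have h6 : (A + β * e ^ (β - 1)) ^ r'
            ≤ 2 ^ r' * (A ^ r' + (β * e ^ (β - 1)) ^ r') :=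
          rpow_add_le_aux hA0 hz hr'pos.le
        have h7 : (β * e ^ (β - 1)) ^ r' = β ^ r' * e ^ p := by
          rw [Real.mul_rpow hβ0.le (Real.rpow_nonneg he _), hpdef, Real.rpow_mul he]
        have h8 : β ^ r' * e ^ p ≤ β ^ r' * ((s - t₁) ^ p + (t₂ - s) ^ p) :=
          mul_le_mul_of_nonneg_left hep hβr'
        calc ‖v σ s‖ ^ r' ≤ 2 ^ r' * (A ^ r' + (β * e ^ (β - 1)) ^ r') := le_trans h5 h6
          _ = 2 ^ r' * (A ^ r' + β ^ r' * e ^ p) := by rw [h7]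
          _ ≤ 2 ^ r' * (A ^ r' + β ^ r' * ((s - t₁) ^ p + (t₂ - s) ^ p)) := by
              have := mul_le_mul_of_nonneg_left (by linarith [h8] : A ^ r' + β ^ r' * e ^ p ≤ A ^ r' + β ^ r' * ((s - t₁) ^ p + (t₂ - s) ^ p)) h2r'.le
              linarith
      by_cases hsm : s ≤ m
      · refine main (s - t₁) hb1 ?_ (by linarith)
        rw [hvdef]; simp only [if_pos hsm]
        exact hnormv _ σ hσ (mul_nonneg hβ0.le (Real.rpow_nonneg hb1 _))
      · refine main (t₂ - s) hb2 ?_ (by linarith)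
        rw [hvdef]; simp only [if_neg hsm]
        have hrw : (-(β * (t₂ - s) ^ (β - 1))) • σ = (β * (t₂ - s) ^ (β - 1)) • (-σ) := by
          rw [neg_smul, smul_neg]
        rw [hrw]
        exact hnormv _ (-σ) (by rwa [norm_neg])
          (mul_nonneg hβ0.le (Real.rpow_nonneg hb2 _))
    have hL := hL2 (φ σ s) (v σ s)
    have hmul : C / r' * ‖v σ s‖ ^ r'
        ≤ C / r' * (2 ^ r' * (A ^ r' + β ^ r' * ((s - t₁) ^ p + (t₂ - s) ^ p))) :=
      mul_le_mul_of_nonneg_left hkey (div_pos hC hr'pos).le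
    have heq : C / r' * (2 ^ r' * (A ^ r' + β ^ r' * ((s - t₁) ^ p + (t₂ - s) ^ p))) + C
        = c₁ + c₂ * ((s - t₁) ^ p + (t₂ - s) ^ p) := by
      rw [hc₁def, hc₂def, hadef]; ring
    linarith
  -- pointwise lower bound
  have hlow : ∀ (σ : EuclideanSpace ℝ (Fin d)) (s : ℝ), -C ≤ L (φ σ s) (v σ s) := by
    intro σ s
    have h1 := hL1 (φ σ s) (v σ s)
    have h2 : (0:ℝ) ≤ 1 / (r' * C) * ‖v σ s‖ ^ r' :=
      mul_nonneg (div_nonneg zero_le_one (mul_pos hr'pos hC).le)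
        (Real.rpow_nonneg (norm_nonneg (v σ s)) r')
    linarith
  -- integrability of the majorant
  have hi1 : IntervalIntegrable (fun s : ℝ => (s - t₁) ^ p) volume t₁ t₂ := by
    have := (intervalIntegral.intervalIntegrable_rpow' (a := 0) (b := t₂ - t₁) hp).comp_sub_right t₁
    simpa using this
  have hi2 : IntervalIntegrable (fun s : ℝ => (t₂ - s) ^ p) volume t₁ t₂ := by
    have := (intervalIntegral.intervalIntegrable_rpow' (a := t₂ - t₂) (b := t₂ - t₁) hp).comp_sub_left t₂
    simpa using this.symm
  have hz0 : (0:ℝ) ^ (p + 1) = 0 := Real.zero_rpow hp1.ne'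
  have he1 : (∫ s in t₁..t₂, (s - t₁) ^ p) = Δ ^ (p + 1) / (p + 1) := by
    rw [intervalIntegral.integral_comp_sub_right (fun u => u ^ p) t₁,
      integral_rpow (Or.inl hp)]
    simp [hz0, hΔdef]
  have he2 : (∫ s in t₁..t₂, (t₂ - s) ^ p) = Δ ^ (p + 1) / (p + 1) := by
    rw [intervalIntegral.integral_comp_sub_left (fun u => u ^ p) t₂,
      integral_rpow (Or.inl hp)]
    simp [hz0, hΔdef]
  set g : ℝ → ℝ := fun s => c₁ + c₂ * ((s - t₁) ^ p + (t₂ - s) ^ p) with hgdef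
  have hgInt : IntervalIntegrable g volume t₁ t₂ := by
    rw [hgdef]
    exact (intervalIntegrable_const).add ((hi1.add hi2).const_mul c₂)
  have hgIoc : IntegrableOn g (Set.Ioc t₁ t₂) :=
    (intervalIntegrable_iff_integrableOn_Ioc_of_le ht.le).mp hgInt
  set B₀ : ℝ := c₁ * Δ + c₂ * (2 * (Δ ^ (p + 1) / (p + 1))) with hB₀def
  have hgval : ∫ s in Set.Ioc t₁ t₂, g s = B₀ := by
    rw [← intervalIntegral.integral_of_le ht.le, hgdef]
    rw [intervalIntegral.integral_add intervalIntegrable_const ((hi1.add hi2).const_mul c₂),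
      intervalIntegral.integral_const_mul,
      intervalIntegral.integral_add hi1 hi2, he1, he2, intervalIntegral.integral_const]
    rw [hB₀def]
    simp only [smul_eq_mul, ← hΔdef]
    ring
  -- measurability
  have hφm : Measurable fun pr : EuclideanSpace ℝ (Fin d) × ℝ => φ pr.1 pr.2 := by
    rw [hφdef]
    apply Measurable.add
    apply Measurable.add
    · fun_prop
    · fun_prop
    · apply Measurable.fun_smul
      · apply Measurable.ite (measurableSet_le (by fun_prop) measurable_const) <;> fun_prop
      · fun_prop
  have hvm : Measurable fun pr : EuclideanSpace ℝ (Fin d) × ℝ => v pr.1 pr.2 := by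
    rw [hvdef]
    apply Measurable.add
    · fun_prop
    · apply Measurable.fun_smul
      · apply Measurable.ite (measurableSet_le (by fun_prop) measurable_const) <;> fun_prop
      · fun_prop
  have hGm : Measurable fun pr : EuclideanSpace ℝ (Fin d) × ℝ => L (φ pr.1 pr.2) (v pr.1 pr.2) :=
    hLc.measurable.comp (hφm.prodMk hvm)
  have hhm : ∀ σ : EuclideanSpace ℝ (Fin d),
      AEStronglyMeasurable (fun s => L (φ σ s) (v σ s))
        (volume.restrict (Set.Ioc t₁ t₂)) := by
    intro σ
    exact ((hGm.comp (measurable_const.prodMk measurable_id)).stronglyMeasurable).aestronglyMeasurable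
  have hgs : ∀ s : ℝ, g s = c₁ + c₂ * ((s - t₁) ^ p + (t₂ - s) ^ p) := fun s => rfl
  have hg0 : ∀ s ∈ Set.Ioc t₁ t₂, 0 ≤ g s := by
    intro s hs
    have hw1 : (0:ℝ) ≤ (s - t₁) ^ p := Real.rpow_nonneg (by have := hs.1; linarith) p
    have hw2 : (0:ℝ) ≤ (t₂ - s) ^ p := Real.rpow_nonneg (by have := hs.2; linarith) p
    rw [hgs s]
    have h1 : 0 ≤ c₂ * ((s - t₁) ^ p + (t₂ - s) ^ p) :=
      mul_nonneg hc₂0 (add_nonneg hw1 hw2)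
    linarith
  have hhInt : ∀ σ : EuclideanSpace ℝ (Fin d), ‖σ‖ ≤ 1 →
      IntegrableOn (fun s => L (φ σ s) (v σ s)) (Set.Ioc t₁ t₂) := by
    intro σ hσ
    apply Integrable.mono'
      (hgIoc.add ((integrableOn_const_iff).mpr (Or.inr measure_Ioc_lt_top) :
        IntegrableOn (fun _ => C) (Set.Ioc t₁ t₂) volume)) (hhm σ)
    filter_upwards [ae_restrict_mem measurableSet_Ioc] with s hs
    rw [Real.norm_eq_abs, abs_le]
    refine ⟨?_, ?_⟩
    · have h1 := hlow σ s
      have h2 := hg0 s hs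
      simp only [Pi.add_apply]
      linarith
    · have h1 := hvnorm σ hσ s hs
      simp only [Pi.add_apply]
      rw [hgs s]
      linarith [hgs s ▸ h1]
  -- volume of Ioc
  have hIocVol : (volume (Set.Ioc t₁ t₂)).toReal = Δ := by
    rw [Real.volume_Ioc, ENNReal.toReal_ofReal hΔ.le]
  -- bound on the inner integral
  have hJle : ∀ σ : EuclideanSpace ℝ (Fin d), ‖σ‖ ≤ 1 →
      (∫ s in Set.Ioc t₁ t₂, L (φ σ s) (v σ s)) ≤ B₀ := by
    intro σ hσ
    rw [← hgval]
    exact setIntegral_mono_on (hhInt σ hσ) hgIoc measurableSet_Ioc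
      (fun s hs => hvnorm σ hσ s hs)
  have hJlow : ∀ σ : EuclideanSpace ℝ (Fin d), ‖σ‖ ≤ 1 →
      -(C * Δ) ≤ ∫ s in Set.Ioc t₁ t₂, L (φ σ s) (v σ s) := by
    intro σ hσ
    have h1 : (∫ _ in Set.Ioc t₁ t₂, (-C : ℝ)) ≤ ∫ s in Set.Ioc t₁ t₂, L (φ σ s) (v σ s) :=
      setIntegral_mono_on ((integrableOn_const_iff).mpr (Or.inr measure_Ioc_lt_top))
        (hhInt σ hσ) measurableSet_Ioc (fun s _ => hlow σ s)
    rw [setIntegral_const, measureReal_def, hIocVol, smul_eq_mul] at h1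
    linarith
  have hB₀0 : 0 ≤ B₀ := by
    have hΔp : (0:ℝ) ≤ Δ ^ (p + 1) := Real.rpow_nonneg hΔ.le _
    rw [hB₀def]
    have h1 : 0 ≤ c₂ * (2 * (Δ ^ (p + 1) / (p + 1))) :=
      mul_nonneg hc₂0 (mul_nonneg (by norm_num) (div_nonneg hΔp hp1.le))
    have h2 : 0 ≤ c₁ * Δ := mul_nonneg hc₁0.le hΔ.le
    linarith
  -- integrability of the inner integral over the ball
  set Sball : Set (EuclideanSpace ℝ (Fin d)) := Metric.closedBall 0 1 with hSdef
  have hSm : MeasurableSet Sball := measurableSet_closedBall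
  have hVlt : volume Sball < ⊤ := (isCompact_closedBall _ _).measure_lt_top
  have hVpos : 0 < volume Sball := by
    rw [hSdef]
    exact Metric.measure_closedBall_pos volume 0 one_pos
  set V : ℝ := (volume Sball).toReal with hVdef
  have hV : 0 < V := ENNReal.toReal_pos hVpos.ne' hVlt.ne
  have hJsm : StronglyMeasurable fun σ : EuclideanSpace ℝ (Fin d) =>
      ∫ s in Set.Ioc t₁ t₂, L (φ σ s) (v σ s) :=
    hGm.stronglyMeasurable.integral_prod_right'
  have hJint : IntegrableOn (fun σ => ∫ s in Set.Ioc t₁ t₂, L (φ σ s) (v σ s)) Sball := by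
    apply Integrable.mono'
      ((integrableOn_const_iff).mpr (Or.inr hVlt) : IntegrableOn (fun _ => B₀ + C * Δ) Sball volume)
      hJsm.aestronglyMeasurable.restrict
    filter_upwards [ae_restrict_mem hSm] with σ hσ
    have hσn : ‖σ‖ ≤ 1 := by
      rw [hSdef] at hσ
      simpa [mem_closedBall_zero_iff] using hσ
    rw [Real.norm_eq_abs, abs_le]
    have h1 := hJle σ hσn
    have h2 := hJlow σ hσn
    have h3 : 0 < C * Δ := mul_pos hC hΔ
    exact ⟨by linarith, by linarith⟩
  have houter : (∫ σ in Sball, ∫ s in Set.Ioc t₁ t₂, L (φ σ s) (v σ s)) ≤ V * B₀ := by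
    have h1 : (∫ σ in Sball, ∫ s in Set.Ioc t₁ t₂, L (φ σ s) (v σ s))
        ≤ ∫ _ in Sball, B₀ := by
      apply setIntegral_mono_on hJint ((integrableOn_const_iff).mpr (Or.inr hVlt)) hSm
      intro σ hσ
      apply hJle
      rw [hSdef] at hσ
      simpa [mem_closedBall_zero_iff] using hσ
    rwa [setIntegral_const, smul_eq_mul, measureReal_def, ← hVdef] at h1
  -- final algebraic bound
  have hA : A ^ r' * Δ = ‖x - y‖ ^ r' * Δ ^ (1 - r') := by
    rw [norm_sub_rev x y, hAdef, Real.div_rpow (norm_nonneg _) hΔ.le,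
      Real.rpow_sub hΔ, Real.rpow_one]
    have hΔr' : Δ ^ r' ≠ 0 := (Real.rpow_pos_of_pos hΔ r').ne'
    field_simp [hΔr']
  have hT2 : Δ ^ (p + 1) = Δ ^ (1 - r' * (1 - β)) := by
    congr 1
    rw [hpdef]; ring
  have hB₀eq : B₀ = a * (‖x - y‖ ^ r' * Δ ^ (1 - r')) + b * Δ ^ (1 - r' * (1 - β)) + C * Δ := by
    rw [hB₀def, hc₁def, hc₂def, ← hA, ← hT2, hbdef]
    field_simp [hp1.ne']
    ring
  have hT1n : 0 ≤ ‖x - y‖ ^ r' * Δ ^ (1 - r') :=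
    mul_nonneg (Real.rpow_nonneg (norm_nonneg _) _) (Real.rpow_nonneg hΔ.le _)
  have hT2n : 0 ≤ Δ ^ (1 - r' * (1 - β)) := Real.rpow_nonneg hΔ.le _
  have hfinal : B₀ ≤ C' * (‖x - y‖ ^ r' * Δ ^ (1 - r') + Δ ^ (1 - r' * (1 - β)) + Δ) := by
    have hexp : C' * (‖x - y‖ ^ r' * Δ ^ (1 - r') + Δ ^ (1 - r' * (1 - β)) + Δ)
        = a * (‖x - y‖ ^ r' * Δ ^ (1 - r')) + b * Δ ^ (1 - r' * (1 - β)) + C * Δ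
          + ((b + C) * (‖x - y‖ ^ r' * Δ ^ (1 - r')) + (a + C) * Δ ^ (1 - r' * (1 - β))
              + (a + b) * Δ) := by
      rw [hC'def]; ring
    rw [hB₀eq, hexp]
    have n1 : 0 ≤ (b + C) * (‖x - y‖ ^ r' * Δ ^ (1 - r')) :=
      mul_nonneg (by linarith) hT1n
    have n2 : 0 ≤ (a + C) * Δ ^ (1 - r' * (1 - β)) := mul_nonneg (by linarith) hT2n
    have n3 : 0 ≤ (a + b) * Δ := mul_nonneg (by linarith) hΔ.le
    linarith
  -- put everything together
  calc (1 / V) *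
        (∫ σ in Sball,
          ∫ s in t₁..t₂,
            L (x + ((s - t₁) / Δ) • (y - x) +
                 (if s ≤ m then (s - t₁) ^ β else (t₂ - s) ^ β) • σ)
              (deriv (fun u : ℝ =>
                x + ((u - t₁) / Δ) • (y - x) +
                  (if u ≤ m then (u - t₁) ^ β else (t₂ - u) ^ β) • σ) s))
      = (1 / V) * ∫ σ in Sball, ∫ s in Set.Ioc t₁ t₂, L (φ σ s) (v σ s) := by
        congr 1
        exact integral_congr_ae (Filter.Eventually.of_forall fun σ => hIJ σ)
    _ ≤ (1 / V) * (V * B₀) := by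
        exact mul_le_mul_of_nonneg_left houter (div_nonneg zero_le_one hV.le)
    _ = B₀ := by field_simp [hV.ne']
    _ ≤ C' * (‖x - y‖ ^ r' * Δ ^ (1 - r') + Δ ^ (1 - r' * (1 - β)) + Δ) := hfinal
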